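/- Replaceability for the PN(k,p,q) lower bounds: let p ∈ {k+1,…,n}, q ∈ {1,…,n}, and let v : {1,…,k} → {1,…,n} be an arbitrary assignment of target outcome values. Then P(⋂_{j=1}^{k} {Y_j = v(j)} ∩ {X = p} ∩ {Y = q}) ≥ max{ 0, Σ_{j=1}^{k} [ P(Y_j = v(j)) + P(X = j) − P(X = j, Y = v(j)) ] + P(X = p, Y = q) − k }. -/

import Mathlib

open MeasureTheory

lemma toReal_compl_prob {Ω : Type*} [MeasurableSpace Ω] (P : Measure Ω)
    [IsProbabilityMeasure P] {s : Set Ω} (hs : MeasurableSet s) :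
    (P sᶜ).toReal = 1 - (P s).toReal := by
  rw [prob_compl_eq_one_sub hs,
    ENNReal.toReal_sub_of_le prob_le_one ENNReal.one_ne_top, ENNReal.toReal_one]

lemma bonferroni {Ω ι : Type*} [MeasurableSpace Ω] (P : Measure Ω)
    [IsProbabilityMeasure P] (s : Finset ι) (f : ι → Set Ω)
    (hf : ∀ i ∈ s, MeasurableSet (f i)) :
    ∑ i ∈ s, (P (f i)).toReal - ((s.card : ℝ) - 1) ≤ (P (⋂ i ∈ s, f i)).toReal := by
  have hI : MeasurableSet (⋂ i ∈ s, f i) :=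
    MeasurableSet.biInter s.countable_toSet (fun i hi => hf i hi)
  have h1 : (P ((⋂ i ∈ s, f i)ᶜ)).toReal ≤ ∑ i ∈ s, (P ((f i)ᶜ)).toReal := by
    rw [Set.compl_iInter₂]
    calc (P (⋃ i ∈ s, (f i)ᶜ)).toReal
        ≤ (∑ i ∈ s, P ((f i)ᶜ)).toReal :=
          ENNReal.toReal_mono
            (ENNReal.sum_ne_top.mpr (fun i _ => measure_ne_top P _))
            (measure_biUnion_finset_le s _)
      _ = ∑ i ∈ s, (P ((f i)ᶜ)).toReal :=
          ENNReal.toReal_sum (fun i _ => measure_ne_top P _)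
  rw [toReal_compl_prob P hI] at h1
  have h2 : ∑ i ∈ s, (P ((f i)ᶜ)).toReal
      = (s.card : ℝ) - ∑ i ∈ s, (P (f i)).toReal := by
    have : ∀ i ∈ s, (P ((f i)ᶜ)).toReal = 1 - (P (f i)).toReal :=
      fun i hi => toReal_compl_prob P (hf i hi)
    rw [Finset.sum_congr rfl this, Finset.sum_sub_distrib, Finset.sum_const,
      nsmul_eq_mul, mul_one]
  rw [h2] at h1
  linarith

theorem pn_kpq_lower_bounds_replaceability
    {Ω : Type*} [MeasurableSpace Ω] (P : Measure Ω) [IsProbabilityMeasure P]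
    (n k : ℕ) (hk1 : 1 ≤ k) (hkn : k ≤ n)
    (X : Ω → ℕ) (Y : ℕ → Ω → ℕ) (Yobs : Ω → ℕ)
    (hX : Measurable X) (hY : ∀ j, Measurable (Y j))
    (hXr : ∀ ω, X ω ∈ Finset.Icc 1 n)
    (hYr : ∀ j ω, Y j ω ∈ Finset.Icc 1 n)
    (hcons : ∀ ω, Yobs ω = Y (X ω) ω)
    (p : ℕ) (hp : p ∈ Finset.Icc (k+1) n)
    (q : ℕ) (hq : q ∈ Finset.Icc 1 n)
    (v : ℕ → ℕ) (hv : ∀ j ∈ Finset.Icc 1 k, v j ∈ Finset.Icc 1 n) :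
    max 0
      ((∑ j ∈ Finset.Icc 1 k,
          ((P {ω | Y j ω = v j}).toReal + (P {ω | X ω = j}).toReal - (P {ω | X ω = j ∧ Yobs ω = v j}).toReal))
        + (P {ω | X ω = p ∧ Yobs ω = q}).toReal - (k : ℝ)) ≤ (P ((⋂ j ∈ Finset.Icc 1 k, {ω | Y j ω = v j}) ∩ {ω | X ω = p} ∩ {ω | Yobs ω = q})).toReal := by
  set A : ℕ → Set Ω := fun j => {ω | Y j ω = v j} with hA
  set C : Set Ω := {ω | X ω = p ∧ Y p ω = q} with hC
  have hAm : ∀ j, MeasurableSet (A j) := fun j => (hY j) (measurableSet_singleton _)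
  have hXm : ∀ j, MeasurableSet {ω | X ω = j} := fun j => hX (measurableSet_singleton _)
  have hCm : MeasurableSet C := by
    have : C = {ω | X ω = p} ∩ {ω | Y p ω = q} := by ext ω; simp [hC, Set.mem_setOf_eq]
    rw [this]; exact (hXm p).inter ((hY p) (measurableSet_singleton _))
  -- the event with Yobs rewritten via consistency
  have hCobs : {ω | X ω = p ∧ Yobs ω = q} = C := by
    ext ω; simp only [hC, Set.mem_setOf_eq, hcons ω]
    constructor
    · rintro ⟨h1, h2⟩; exact ⟨h1, by rwa [h1] at h2⟩
    · rintro ⟨h1, h2⟩; exact ⟨h1, by rwa [h1]⟩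
  have hBobs : ∀ j, {ω | X ω = j ∧ Yobs ω = v j} = {ω | X ω = j} ∩ A j := by
    intro j; ext ω; simp only [hA, Set.mem_inter_iff, Set.mem_setOf_eq, hcons ω]
    constructor
    · rintro ⟨h1, h2⟩; exact ⟨h1, by rwa [h1] at h2⟩
    · rintro ⟨h1, h2⟩; exact ⟨h1, by rwa [h1]⟩
  -- inclusion-exclusion term
  have hIE : ∀ j, (P (A j ∪ {ω | X ω = j})).toReal
      = (P (A j)).toReal + (P {ω | X ω = j}).toReal - (P ({ω | X ω = j} ∩ A j)).toReal := by
    intro j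
    have := measure_union_add_inter (μ := P) (A j) (hXm j)
    have h2 : (P (A j ∪ {ω | X ω = j})).toReal + (P (A j ∩ {ω | X ω = j})).toReal
        = (P (A j)).toReal + (P {ω | X ω = j}).toReal := by
      rw [← ENNReal.toReal_add (measure_ne_top P _) (measure_ne_top P _),
        ← ENNReal.toReal_add (measure_ne_top P _) (measure_ne_top P _), this]
    rw [Set.inter_comm] at h2
    linarith
  -- the family for Bonferroni
  set g : ℕ → Set Ω := fun j => if j = 0 then C else A j ∪ {ω | X ω = j} with hg
  have hgm : ∀ i ∈ insert 0 (Finset.Icc 1 k), MeasurableSet (g i) := by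
    intro i _
    by_cases hi : i = 0
    · simp [hg, hi, hCm]
    · simp only [hg, hi, if_false]; exact (hAm i).union (hXm i)
  have hbon := bonferroni P (insert 0 (Finset.Icc 1 k)) g hgm
  have h0 : (0 : ℕ) ∉ Finset.Icc 1 k := by simp
  rw [Finset.sum_insert h0, Finset.card_insert_of_notMem h0] at hbon
  have hcard : (Finset.Icc 1 k).card = k := by simp
  -- identify the intersection
  have hpk : k + 1 ≤ p := (Finset.mem_Icc.mp hp).1
  have hset : (⋂ i ∈ insert 0 (Finset.Icc 1 k), g i)
      = (⋂ j ∈ Finset.Icc 1 k, A j) ∩ {ω | X ω = p} ∩ {ω | Yobs ω = q} := by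
    ext ω
    simp only [Set.mem_iInter, Set.mem_inter_iff, Set.mem_setOf_eq, Finset.mem_insert,
      Finset.mem_Icc, hg]
    constructor
    · intro h
      have hc : ω ∈ C := by simpa using h 0 (Or.inl rfl)
      obtain ⟨hxp, hyq⟩ := hc
      refine ⟨⟨fun j hj => ?_, hxp⟩, by rw [hcons ω, hxp]; exact hyq⟩
      have := h j (Or.inr hj)
      have hj0 : j ≠ 0 := by omega
      simp only [hj0, if_false] at this
      rcases this with h' | h'
      · exact h'
      · exfalso; simp only [Set.mem_setOf_eq, hxp] at h'; omega
    · rintro ⟨⟨hall, hxp⟩, hyq⟩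
      intro i hi
      rcases hi with hi | hi
      · subst hi; simp only [if_true]
        exact ⟨hxp, by rw [hcons ω, hxp] at hyq; exact hyq⟩
      · have hi0 : i ≠ 0 := by omega
        simp only [hi0, if_false]
        exact Or.inl (hall i hi)
  rw [hset] at hbon
  -- rewrite the sum
  have hsum : ∀ j ∈ Finset.Icc 1 k, (P (g j)).toReal
      = (P (A j)).toReal + (P {ω | X ω = j}).toReal - (P {ω | X ω = j ∧ Yobs ω = v j}).toReal := by
    intro j hj
    have hj0 : j ≠ 0 := by simp at hj; omega
    simp only [hg, hj0, if_false]
    rw [hIE j, hBobs j]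
  rw [Finset.sum_congr rfl hsum] at hbon
  have hg0 : g 0 = C := by simp [hg]
  rw [hg0, ← hCobs] at hbon
  rw [hcard] at hbon
  simp only [hA] at hbon
  push_cast at hbon
  apply max_le ENNReal.toReal_nonneg
  linarith
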